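/- Let σ_N² > 0, σ_X² > 0, let K ≥ 1 be an integer, and set D = (1/K)·(σ_N² + ((π − 2)/π)·(σ_N² + σ_X²)). Then (K/2)·log(1 + σ_N²/(K·D − σ_N²)) + (K/2)·log(1 + σ_X²/(K·D)) = (K/2)·log(1 + π/(π − 2)). -/

import Mathlib

open Real

/-- The independent-encoding sum rate `R_in(D)` evaluated at the distortion of SignSGD
collapses to the constant `(K/2)·log(1 + π/(π − 2))`. -/
theorem signSGD_sum_rate_constant
    (σN2 σX2 : ℝ) (hσN2 : 0 < σN2) (hσX2 : 0 < σX2) (K : ℕ) (hK : 1 ≤ K)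
    (D : ℝ) (hD : D = (1 / K) * (σN2 + ((π - 2) / π) * (σN2 + σX2))) :
    (K / 2 : ℝ) * Real.log (1 + σN2 / (K * D - σN2))
      + (K / 2 : ℝ) * Real.log (1 + σX2 / (K * D))
      = (K / 2 : ℝ) * Real.log (1 + π / (π - 2)) := by
  have hπ2 : (0:ℝ) < π - 2 := by have := Real.pi_gt_three; linarith
  have hπ : (0:ℝ) < π := by linarith
  have hK0 : (0:ℝ) < (K:ℝ) := by exact_mod_cast Nat.lt_of_lt_of_le Nat.zero_lt_one hK
  have hKD : (K:ℝ) * D = σN2 + ((π - 2) / π) * (σN2 + σX2) := by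
    rw [hD]
    field_simp
  have hcA : 0 < ((π - 2) / π) * (σN2 + σX2) := by positivity
  have hsub : (K:ℝ) * D - σN2 = ((π - 2) / π) * (σN2 + σX2) := by
    rw [hKD]; ring
  have hKDpos : 0 < (K:ℝ) * D := by rw [hKD]; positivity
  have hx : 0 < 1 + σN2 / ((K:ℝ) * D - σN2) := by
    rw [hsub]; positivity
  have hy : 0 < 1 + σX2 / ((K:ℝ) * D) := by positivity
  have hne1 : ((π - 2) / π) * (σN2 + σX2) ≠ 0 := ne_of_gt hcA
  have hne2 : σN2 + ((π - 2) / π) * (σN2 + σX2) ≠ 0 := by positivity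
  have harg : (1 + σN2 / ((K:ℝ) * D - σN2)) * (1 + σX2 / ((K:ℝ) * D))
      = 1 + π / (π - 2) := by
    rw [hsub, hKD]
    field_simp
    ring
  rw [← mul_add, ← Real.log_mul (ne_of_gt hx) (ne_of_gt hy), harg]
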